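/- Let M be an FB-module over a commutative ring k. The assignment φ ↦ (φ[n])_{n≥0} is a bijection from the set of symmetric operations on M to the set of sequences of simple symmetric operations on M. -/

import Mathlib

/-- An FB-module over `k`: a functor from the groupoid of finite sets (modelled as finite
subsets of `ℕ`) and bijections to `k`-modules.  A bijection `S → T` is encoded by a
function `f : ℕ → ℕ` that is injective on `S` with `S.image f = T`; the functor only
depends on the restriction of `f` to `S` (`map_congr`). -/
structure FBModule (k : Type) [CommRing k] where
  M : Finset ℕ → Type
  [acg : ∀ S, AddCommGroup (M S)]
  [mod : ∀ S, Module k (M S)]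
  map : ∀ (f : ℕ → ℕ) (S T : Finset ℕ), Set.InjOn f S → S.image f = T → (M S →ₗ[k] M T)
  map_id : ∀ (S : Finset ℕ) (h1 : Set.InjOn (id : ℕ → ℕ) S) (h2 : S.image id = S),
    map id S S h1 h2 = LinearMap.id
  map_comp : ∀ (f g : ℕ → ℕ) (S T U : Finset ℕ) (h1 : Set.InjOn f S) (h2 : S.image f = T)
    (h3 : Set.InjOn g T) (h4 : T.image g = U) (h5 : Set.InjOn (g ∘ f) S)
    (h6 : S.image (g ∘ f) = U),
    map g T U h3 h4 ∘ₗ map f S T h1 h2 = map (g ∘ f) S U h5 h6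
  map_congr : ∀ (f g : ℕ → ℕ) (S T : Finset ℕ) (h : ∀ x ∈ S, f x = g x)
    (h1 : Set.InjOn f S) (h2 : S.image f = T) (h3 : Set.InjOn g S) (h4 : S.image g = T),
    map f S T h1 h2 = map g S T h3 h4

attribute [instance] FBModule.acg FBModule.mod

variable {k : Type} [CommRing k]

/-- The canonical identification `M(s) ≅ M(t)` for equal finite sets `s = t` (the action
of the identity bijection). -/
def FBModule.cast (N : FBModule k) {s t : Finset ℕ} (h : s = t) : N.M s →ₗ[k] N.M t :=
  N.map id s t (Set.injOn_id _) (by rwa [Finset.image_id])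

/-- A symmetric operation `φ` on an FB-module `N`: for every finite set `S` and subsets
`A, B ⊆ S`, a `k`-linear map `φ^S_{A,B} : N(S∖B) → N(S∖A)`, natural with respect to
bijections. -/
structure SymOp (N : FBModule k) where
  φ : ∀ (S A B : Finset ℕ), A ⊆ S → B ⊆ S → (N.M (S \ B) →ₗ[k] N.M (S \ A))
  natural : ∀ (f : ℕ → ℕ) (S T A B : Finset ℕ) (hA : A ⊆ S) (hB : B ⊆ S)
    (hf : Set.InjOn f S) (hT : S.image f = T)
    (hA' : A.image f ⊆ T) (hB' : B.image f ⊆ T)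
    (h1 : Set.InjOn f ((S \ A : Finset ℕ) : Set ℕ)) (h2 : (S \ A).image f = T \ A.image f)
    (h3 : Set.InjOn f ((S \ B : Finset ℕ) : Set ℕ)) (h4 : (S \ B).image f = T \ B.image f),
    N.map f (S \ A) (T \ A.image f) h1 h2 ∘ₗ φ S A B hA hB =
      φ T (A.image f) (B.image f) hA' hB' ∘ₗ N.map f (S \ B) (T \ B.image f) h3 h4

/-- A simple symmetric operation on an FB-module `N`: the same data as a symmetric
operation, but defined only for disjoint pairs of subsets. -/
structure SimpleSymOp (N : FBModule k) where
  φ : ∀ (S A B : Finset ℕ), A ⊆ S → B ⊆ S → Disjoint A B →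
    (N.M (S \ B) →ₗ[k] N.M (S \ A))
  natural : ∀ (f : ℕ → ℕ) (S T A B : Finset ℕ) (hA : A ⊆ S) (hB : B ⊆ S)
    (hAB : Disjoint A B) (hf : Set.InjOn f S) (hT : S.image f = T)
    (hA' : A.image f ⊆ T) (hB' : B.image f ⊆ T) (hAB' : Disjoint (A.image f) (B.image f))
    (h1 : Set.InjOn f ((S \ A : Finset ℕ) : Set ℕ)) (h2 : (S \ A).image f = T \ A.image f)
    (h3 : Set.InjOn f ((S \ B : Finset ℕ) : Set ℕ)) (h4 : (S \ B).image f = T \ B.image f),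
    N.map f (S \ A) (T \ A.image f) h1 h2 ∘ₗ φ S A B hA hB hAB =
      φ T (A.image f) (B.image f) hA' hB' hAB' ∘ₗ N.map f (S \ B) (T \ B.image f) h3 h4

section Lemmas

lemma union_sdiff_union_eq (S B F : Finset ℕ) (hF : Disjoint F S) :
    (S ∪ F) \ (B ∪ F) = S \ B := by
  ext x
  simp only [Finset.mem_sdiff, Finset.mem_union, not_or]
  constructor
  · rintro ⟨h1 | h1, h2, h3⟩
    · exact ⟨h1, h2⟩
    · exact absurd h1 h3
  · rintro ⟨h1, h2⟩
    exact ⟨Or.inl h1, h2, Finset.disjoint_right.mp hF h1⟩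

end Lemmas

/-- The simple operation `φ[n]` associated to a symmetric operation `φ`, computed with
respect to a chosen finite set `F` of fresh elements (any `F` with `|F| = n` disjoint
from `S` gives the same result, by naturality):
`φ[n]^S_{A,B} = φ^{S ⊔ F}_{A ∪ F, B ∪ F}`. -/
def SymOp.bracket {N : FBModule k} (φ : SymOp N) (S A B F : Finset ℕ)
    (hA : A ⊆ S) (hB : B ⊆ S) (hF : Disjoint F S) :
    N.M (S \ B) →ₗ[k] N.M (S \ A) :=
  N.cast (union_sdiff_union_eq S A F hF) ∘ₗ
    φ.φ (S ∪ F) (A ∪ F) (B ∪ F)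
      (Finset.union_subset_union hA (Finset.Subset.refl F))
      (Finset.union_subset_union hB (Finset.Subset.refl F)) ∘ₗ
    N.cast (union_sdiff_union_eq S B F hF).symm
section Helpers

variable (N : FBModule k)

lemma FBModule.cast_refl_apply {s : Finset ℕ} (h : s = s) (x : N.M s) :
    N.cast h x = x := by
  have : N.cast h = LinearMap.id := N.map_id s _ _
  rw [this]; rfl

lemma FBModule.cast_cast_apply {s t u : Finset ℕ} (h1 : s = t) (h2 : t = u) (x : N.M s) :
    N.cast h2 (N.cast h1 x) = N.cast (h1.trans h2) x := by
  subst h1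
  rw [N.cast_refl_apply]

lemma FBModule.map_flex_apply (f : ℕ → ℕ) {s t s' t' : Finset ℕ}
    (hs : s = s') (ht : t = t') (inj : Set.InjOn f s) (him : s.image f = t)
    (inj' : Set.InjOn f s') (him' : s'.image f = t') (x : N.M s') :
    N.map f s' t' inj' him' x = N.cast ht (N.map f s t inj him (N.cast hs.symm x)) := by
  subst hs; subst ht
  rw [N.cast_refl_apply, N.cast_refl_apply]

lemma SimpleSymOp.congr_apply {N : FBModule k} (ψ : ℕ → SimpleSymOp N)
    {m m' : ℕ} {S S' A A' B B' : Finset ℕ}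
    (hm : m = m') (hS : S = S') (hA : A = A') (hB : B = B')
    (pA : A ⊆ S) (pB : B ⊆ S) (pd : Disjoint A B)
    (pA' : A' ⊆ S') (pB' : B' ⊆ S') (pd' : Disjoint A' B') (x : N.M (S' \ B')) :
    (ψ m').φ S' A' B' pA' pB' pd' x =
      N.cast (show S \ A = S' \ A' by rw [hS, hA])
        ((ψ m).φ S A B pA pB pd (N.cast (show S' \ B' = S \ B by rw [hS, hB]) x)) := by
  subst hm; subst hS; subst hA; subst hB
  rw [N.cast_refl_apply, N.cast_refl_apply]

lemma SymOp.congr_apply {N : FBModule k} (φ : SymOp N)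
    {S S' A A' B B' : Finset ℕ}
    (hS : S = S') (hA : A = A') (hB : B = B')
    (pA : A ⊆ S) (pB : B ⊆ S)
    (pA' : A' ⊆ S') (pB' : B' ⊆ S') (x : N.M (S' \ B')) :
    φ.φ S' A' B' pA' pB' x =
      N.cast (show S \ A = S' \ A' by rw [hS, hA])
        (φ.φ S A B pA pB (N.cast (show S' \ B' = S \ B by rw [hS, hB]) x)) := by
  subst hS; subst hA; subst hB
  rw [N.cast_refl_apply, N.cast_refl_apply]

-- set lemmas
lemma sdiff_inter_sdiff (S A B : Finset ℕ) : (S \ (A ∩ B)) \ (A \ B) = S \ A := by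
  ext x
  simp only [Finset.mem_sdiff, Finset.mem_inter, not_and, Finset.mem_sdiff, not_not]
  tauto

lemma sdiff_inter_sdiff' (S A B : Finset ℕ) : (S \ (A ∩ B)) \ (B \ A) = S \ B := by
  rw [Finset.inter_comm]; exact sdiff_inter_sdiff S B A

lemma subset_sdiff_inter_left {S A : Finset ℕ} (B : Finset ℕ) (hA : A ⊆ S) :
    A \ B ⊆ S \ (A ∩ B) := by
  intro x hx
  simp only [Finset.mem_sdiff, Finset.mem_inter, not_and] at *
  exact ⟨hA hx.1, fun _ => hx.2⟩

lemma subset_sdiff_inter_right {S B : Finset ℕ} (A : Finset ℕ) (hB : B ⊆ S) :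
    B \ A ⊆ S \ (A ∩ B) := by
  intro x hx
  simp only [Finset.mem_sdiff, Finset.mem_inter, not_and] at *
  exact ⟨hB hx.1, fun h => absurd h hx.2⟩

lemma disjoint_sdiff_sdiff' (A B : Finset ℕ) : Disjoint (A \ B) (B \ A) := by
  rw [Finset.disjoint_left]
  intro x hx hx'
  simp only [Finset.mem_sdiff] at *
  exact hx.2 hx'.1

lemma image_sdiff_of_injOn (f : ℕ → ℕ) {S X Y : Finset ℕ} (hf : Set.InjOn f S)
    (hX : X ⊆ S) (hY : Y ⊆ S) : (X \ Y).image f = X.image f \ Y.image f := by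
  ext y
  simp only [Finset.mem_image, Finset.mem_sdiff, not_exists]
  constructor
  · rintro ⟨x, ⟨hxX, hxY⟩, rfl⟩
    exact ⟨⟨x, hxX, rfl⟩, fun z hz => hxY (hf (hY hz.1) (hX hxX) hz.2 ▸ hz.1)⟩
  · rintro ⟨⟨x, hxX, rfl⟩, hno⟩
    exact ⟨x, ⟨hxX, fun hxY => hno x ⟨hxY, rfl⟩⟩, rfl⟩

lemma image_inter_of_injOn' (f : ℕ → ℕ) {S A B : Finset ℕ} (hf : Set.InjOn f S)
    (hA : A ⊆ S) (hB : B ⊆ S) : (A ∩ B).image f = A.image f ∩ B.image f := by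
  ext y
  simp only [Finset.mem_image, Finset.mem_inter]
  constructor
  · rintro ⟨x, ⟨hx1, hx2⟩, rfl⟩
    exact ⟨⟨x, hx1, rfl⟩, ⟨x, hx2, rfl⟩⟩
  · rintro ⟨⟨x, hx1, rfl⟩, ⟨z, hz, hzx⟩⟩
    exact ⟨x, ⟨hx1, by rwa [hf (hB hz) (hA hx1) hzx] at hz⟩, rfl⟩

lemma sdiff_union_self_of_subset {S I : Finset ℕ} (hI : I ⊆ S) : (S \ I) ∪ I = S := by
  ext x
  simp only [Finset.mem_union, Finset.mem_sdiff]
  constructor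
  · rintro (⟨h, _⟩ | h)
    · exact h
    · exact hI h
  · intro h
    by_cases hx : x ∈ I
    · exact Or.inr hx
    · exact Or.inl ⟨h, hx⟩

lemma sdiff_union_inter (A B : Finset ℕ) : (A \ B) ∪ (A ∩ B) = A := by
  ext x
  simp only [Finset.mem_union, Finset.mem_sdiff, Finset.mem_inter]
  tauto

lemma sdiff_union_inter' (A B : Finset ℕ) : (B \ A) ∪ (A ∩ B) = B := by
  rw [Finset.inter_comm]; exact sdiff_union_inter B A

lemma union_sdiff_self_right {S F : Finset ℕ} (hF : Disjoint F S) : (S ∪ F) \ F = S := by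
  have h := Finset.disjoint_left.mp hF
  ext x
  simp only [Finset.mem_sdiff, Finset.mem_union]
  constructor
  · rintro ⟨h1 | h1, h2⟩
    · exact h1
    · exact absurd h1 h2
  · intro hx
    exact ⟨Or.inl hx, fun hxF => h hxF hx⟩

lemma union_inter_union_eq {S A B F : Finset ℕ} (hA : A ⊆ S) (hB : B ⊆ S)
    (hAB : Disjoint A B) (hF : Disjoint F S) : (A ∪ F) ∩ (B ∪ F) = F := by
  have h1 := Finset.disjoint_left.mp hAB
  have h2 := Finset.disjoint_left.mp hF
  ext x
  simp only [Finset.mem_inter, Finset.mem_union]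
  constructor
  · rintro ⟨hA' | hF', hB' | hF''⟩
    · exact absurd hB' (h1 hA')
    · exact hF''
    · exact hF'
    · exact hF'
  · intro hx
    exact ⟨Or.inr hx, Or.inr hx⟩

end Helpers
/-- The symmetric operation built from a sequence of simple symmetric operations. -/
noncomputable def liftFun (N : FBModule k) (ψ : ℕ → SimpleSymOp N) (S A B : Finset ℕ)
    (hA : A ⊆ S) (hB : B ⊆ S) : N.M (S \ B) →ₗ[k] N.M (S \ A) :=
  N.cast (sdiff_inter_sdiff S A B) ∘ₗ
    (ψ (A ∩ B).card).φ (S \ (A ∩ B)) (A \ B) (B \ A)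
      (subset_sdiff_inter_left B hA) (subset_sdiff_inter_right A hB)
      (disjoint_sdiff_sdiff' A B) ∘ₗ
    N.cast (sdiff_inter_sdiff' S A B).symm

lemma liftFun_natural (N : FBModule k) (ψ : ℕ → SimpleSymOp N)
    (f : ℕ → ℕ) (S T A B : Finset ℕ) (hA : A ⊆ S) (hB : B ⊆ S)
    (hf : Set.InjOn f S) (hT : S.image f = T)
    (hA' : A.image f ⊆ T) (hB' : B.image f ⊆ T)
    (h1 : Set.InjOn f ((S \ A : Finset ℕ) : Set ℕ)) (h2 : (S \ A).image f = T \ A.image f)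
    (h3 : Set.InjOn f ((S \ B : Finset ℕ) : Set ℕ)) (h4 : (S \ B).image f = T \ B.image f) :
    N.map f (S \ A) (T \ A.image f) h1 h2 ∘ₗ liftFun N ψ S A B hA hB =
      liftFun N ψ T (A.image f) (B.image f) hA' hB' ∘ₗ
        N.map f (S \ B) (T \ B.image f) h3 h4 := by
  have hIS : A ∩ B ⊆ S := fun x hx => hA (Finset.mem_inter.mp hx).1
  have hAS : A \ B ⊆ S := Finset.sdiff_subset.trans hA
  have hBS : B \ A ⊆ S := Finset.sdiff_subset.trans hB
  have injS0 : Set.InjOn f ((S \ (A ∩ B) : Finset ℕ) : Set ℕ) :=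
    hf.mono (Finset.coe_subset.mpr Finset.sdiff_subset)
  have himS0 : (S \ (A ∩ B)).image f = T \ (A ∩ B).image f := by
    rw [image_sdiff_of_injOn f hf (Finset.Subset.refl S) hIS, hT]
  have hfi : (A ∩ B).image f = A.image f ∩ B.image f := image_inter_of_injOn' f hf hA hB
  have hfa : (A \ B).image f = A.image f \ B.image f := image_sdiff_of_injOn f hf hA hB
  have hfb : (B \ A).image f = B.image f \ A.image f := image_sdiff_of_injOn f hf hB hA
  have injA : Set.InjOn f (((S \ (A ∩ B)) \ (A \ B) : Finset ℕ) : Set ℕ) :=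
    hf.mono (Finset.coe_subset.mpr (Finset.sdiff_subset.trans Finset.sdiff_subset))
  have injB : Set.InjOn f (((S \ (A ∩ B)) \ (B \ A) : Finset ℕ) : Set ℕ) :=
    hf.mono (Finset.coe_subset.mpr (Finset.sdiff_subset.trans Finset.sdiff_subset))
  have himA : ((S \ (A ∩ B)) \ (A \ B)).image f
      = (T \ (A ∩ B).image f) \ ((A \ B).image f) := by
    rw [image_sdiff_of_injOn f hf Finset.sdiff_subset hAS, himS0]
  have himB : ((S \ (A ∩ B)) \ (B \ A)).image f
      = (T \ (A ∩ B).image f) \ ((B \ A).image f) := by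
    rw [image_sdiff_of_injOn f hf Finset.sdiff_subset hBS, himS0]
  have pA' : (A \ B).image f ⊆ T \ (A ∩ B).image f := by
    have := Finset.image_subset_image (f := f) (subset_sdiff_inter_left B hA)
    rwa [himS0] at this
  have pB' : (B \ A).image f ⊆ T \ (A ∩ B).image f := by
    have := Finset.image_subset_image (f := f) (subset_sdiff_inter_right A hB)
    rwa [himS0] at this
  have pd' : Disjoint ((A \ B).image f) ((B \ A).image f) := by
    rw [hfa, hfb]; exact disjoint_sdiff_sdiff' _ _
  have hm : (A ∩ B).card = (A.image f ∩ B.image f).card := by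
    rw [← hfi]; exact (Finset.card_image_of_injOn (hf.mono (Finset.coe_subset.mpr hIS))).symm
  have hS0T : T \ (A ∩ B).image f = T \ (A.image f ∩ B.image f) := by rw [hfi]
  have eTA : (T \ (A ∩ B).image f) \ ((A \ B).image f) = T \ A.image f := by
    rw [hfi, hfa]; exact sdiff_inter_sdiff T _ _
  have eTB : (T \ (A ∩ B).image f) \ ((B \ A).image f) = T \ B.image f := by
    rw [hfi, hfb]; exact sdiff_inter_sdiff' T _ _
  have hnat := (ψ (A ∩ B).card).natural f (S \ (A ∩ B)) (T \ (A ∩ B).image f)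
    (A \ B) (B \ A) (subset_sdiff_inter_left B hA) (subset_sdiff_inter_right A hB)
    (disjoint_sdiff_sdiff' A B) injS0 himS0 pA' pB' pd' injA himA injB himB
  apply LinearMap.ext; intro x
  simp only [liftFun, LinearMap.comp_apply]
  rw [N.map_flex_apply f (sdiff_inter_sdiff S A B) eTA injA himA h1 h2]
  rw [SimpleSymOp.congr_apply ψ hm hS0T hfa hfb pA' pB' pd']
  rw [N.map_flex_apply f (sdiff_inter_sdiff' S A B) eTB injB himB h3 h4]
  simp only [N.cast_cast_apply, N.cast_refl_apply]
  have hp := LinearMap.congr_fun hnat (N.cast (sdiff_inter_sdiff' S A B).symm x)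
  simp only [LinearMap.comp_apply] at hp
  rw [← hp]
noncomputable def liftOp (N : FBModule k) (ψ : ℕ → SimpleSymOp N) : SymOp N where
  φ := liftFun N ψ
  natural := fun f S T A B hA hB hf hT hA' hB' h1 h2 h3 h4 =>
    liftFun_natural N ψ f S T A B hA hB hf hT hA' hB' h1 h2 h3 h4

lemma liftOp_bracket (N : FBModule k) (ψ : ℕ → SimpleSymOp N)
    (n : ℕ) (S A B F : Finset ℕ) (hA : A ⊆ S) (hB : B ⊆ S)
    (hAB : Disjoint A B) (hF : Disjoint F S) (hcard : F.card = n) :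
    (liftOp N ψ).bracket S A B F hA hB hF = (ψ n).φ S A B hA hB hAB := by
  have hI : (A ∪ F) ∩ (B ∪ F) = F := union_inter_union_eq hA hB hAB hF
  have hAF : Disjoint F A := hF.mono_right hA
  have hBF : Disjoint F B := hF.mono_right hB
  have hS0 : S = (S ∪ F) \ ((A ∪ F) ∩ (B ∪ F)) := by
    rw [hI]; exact (union_sdiff_self_right hF).symm
  have hA0 : A = (A ∪ F) \ (B ∪ F) :=
    ((union_sdiff_union_eq A B F hAF).trans
      (Finset.sdiff_eq_self_iff_disjoint.mpr hAB)).symm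
  have hB0 : B = (B ∪ F) \ (A ∪ F) :=
    ((union_sdiff_union_eq B A F hBF).trans
      (Finset.sdiff_eq_self_iff_disjoint.mpr hAB.symm)).symm
  have hm : n = ((A ∪ F) ∩ (B ∪ F)).card := by rw [hI, hcard]
  apply LinearMap.ext; intro x
  simp only [SymOp.bracket, liftOp, liftFun, LinearMap.comp_apply]
  rw [SimpleSymOp.congr_apply ψ hm hS0 hA0 hB0 hA hB hAB]
  simp only [N.cast_cast_apply, N.cast_refl_apply]

lemma bracket_prop_phi (N : FBModule k) (ψ : ℕ → SimpleSymOp N) (φ : SymOp N)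
    (hφ : ∀ (n : ℕ) (S A B F : Finset ℕ) (hA : A ⊆ S) (hB : B ⊆ S)
      (hAB : Disjoint A B) (hF : Disjoint F S) (_ : F.card = n),
      φ.bracket S A B F hA hB hF = (ψ n).φ S A B hA hB hAB)
    (S A B : Finset ℕ) (hA : A ⊆ S) (hB : B ⊆ S) :
    φ.φ S A B hA hB = liftFun N ψ S A B hA hB := by
  have hIS : A ∩ B ⊆ S := fun x hx => hA (Finset.mem_inter.mp hx).1
  have dI : Disjoint (A ∩ B) (S \ (A ∩ B)) := Finset.disjoint_sdiff
  have E := hφ (A ∩ B).card (S \ (A ∩ B)) (A \ B) (B \ A) (A ∩ B)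
    (subset_sdiff_inter_left B hA) (subset_sdiff_inter_right A hB)
    (disjoint_sdiff_sdiff' A B) dI rfl
  have hSU : S = (S \ (A ∩ B)) ∪ (A ∩ B) := (sdiff_union_self_of_subset hIS).symm
  have hAU : A = (A \ B) ∪ (A ∩ B) := (sdiff_union_inter A B).symm
  have hBU : B = (B \ A) ∪ (A ∩ B) := (sdiff_union_inter' A B).symm
  apply LinearMap.ext; intro x
  have E' := LinearMap.congr_fun E (N.cast (sdiff_inter_sdiff' S A B).symm x)
  simp only [SymOp.bracket, LinearMap.comp_apply] at E'
  rw [SymOp.congr_apply φ hSU hAU hBU hA hB] at E'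
  simp only [N.cast_cast_apply, N.cast_refl_apply] at E'
  simp only [liftFun, LinearMap.comp_apply]
  rw [← E']
  simp only [N.cast_cast_apply, N.cast_refl_apply]

/-- the assignment `φ ↦ (φ[n])_{n ≥ 0}` is a bijection from the set of
symmetric operations on `M` to the set of sequences of simple symmetric operations on
`M`; equivalently, for every sequence `ψ` of simple symmetric operations there is a
unique symmetric operation `φ` with `φ[n] = ψ n` for all `n`. -/
theorem statement11 (N : FBModule k) (ψ : ℕ → SimpleSymOp N) :
    ∃! φ : SymOp N, ∀ (n : ℕ) (S A B F : Finset ℕ) (hA : A ⊆ S) (hB : B ⊆ S)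
      (hAB : Disjoint A B) (hF : Disjoint F S) (_ : F.card = n),
      φ.bracket S A B F hA hB hF = (ψ n).φ S A B hA hB hAB := by
  refine ⟨liftOp N ψ, fun n S A B F hA hB hAB hF hcard =>
    liftOp_bracket N ψ n S A B F hA hB hAB hF hcard, ?_⟩
  intro φ hφ
  have key := bracket_prop_phi N ψ φ hφ
  cases φ with
  | mk f nat =>
    have hf : f = liftFun N ψ := by
      funext S A B hA hB
      exact key S A B hA hB
    subst hf
    rfl
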